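/- For every integer n ≥ 1 the function t ↦ U_n(t) is differentiable on ℝ and satisfies dU_n/dt = V_n⁻(t)·( f_0(t) − ⟨u⁺, f⁺⟩ ) + V_n⁺(t)·( f_{n+1}(t) − ⟨u⁻, f⁺⟩ ). -/

import Mathlib

open MeasureTheory Matrix Filter

/-- The k-th Fourier coefficient of the symbol `f(e^{iθ}) = e^{2t cos θ}`. -/
noncomputable def fk (t : ℝ) (k : ℤ) : ℝ :=
  (1 / (2 * Real.pi)) *
    ∫ θ in (0:ℝ)..(2 * Real.pi), Real.exp (2 * t * Real.cos θ) * Real.cos ((k : ℝ) * θ)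

/-- The n×n Toeplitz matrix `T_n(t)` with (j,k) entry `f_{j-k}(t)`. -/
noncomputable def Tmat (n : ℕ) (t : ℝ) : Matrix (Fin n) (Fin n) ℝ :=
  fun j k => fk t ((j : ℤ) - (k : ℤ))

/-- The Toeplitz determinant `D_n(t)`. -/
noncomputable def Dn (n : ℕ) (t : ℝ) : ℝ := (Tmat n t).det

/-- δ⁺ = (1,0,…,0)ᵀ. -/
def deltaPlus (n : ℕ) : Fin n → ℝ := fun i => if (i : ℕ) = 0 then 1 else 0

/-- δ⁻ = (0,…,0,1)ᵀ. -/
def deltaMinus (n : ℕ) : Fin n → ℝ := fun i => if (i : ℕ) = n - 1 then 1 else 0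

/-- f⁺ = (f_1,…,f_n)ᵀ. -/
noncomputable def fplus (n : ℕ) (t : ℝ) : Fin n → ℝ := fun j => fk t ((j : ℤ) + 1)

/-- f⁻ = (f_n,…,f_1)ᵀ. -/
noncomputable def fminus (n : ℕ) (t : ℝ) : Fin n → ℝ := fun j => fk t ((n : ℤ) - (j : ℤ))

/-- U_n(t) = ⟨T_n(t)⁻¹ f⁺, δ⁻⟩. -/
noncomputable def Un (n : ℕ) (t : ℝ) : ℝ :=
  dotProduct ((Tmat n t)⁻¹ *ᵥ fplus n t) (deltaMinus n)

/-- V_n⁺(t) = ⟨T_n(t)⁻¹ δ⁺, δ⁺⟩. -/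
noncomputable def Vplus (n : ℕ) (t : ℝ) : ℝ :=
  dotProduct ((Tmat n t)⁻¹ *ᵥ deltaPlus n) (deltaPlus n)

/-- V_n⁻(t) = ⟨T_n(t)⁻¹ δ⁻, δ⁺⟩. -/
noncomputable def Vminus (n : ℕ) (t : ℝ) : ℝ :=
  dotProduct ((Tmat n t)⁻¹ *ᵥ deltaMinus n) (deltaPlus n)

/-! ### Auxiliary lemmas -/

section Aux

open intervalIntegral Metric Finset

lemma auxContInt (t : ℝ) (c : ℝ) :
    IntervalIntegrable (fun θ => Real.exp (2 * t * Real.cos θ) * Real.cos (c * θ))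
      volume 0 (2 * Real.pi) := by
  apply Continuous.intervalIntegrable
  exact ((Real.continuous_exp.comp (continuous_const.mul Real.continuous_cos)).mul
    (Real.continuous_cos.comp (continuous_const.mul continuous_id)))

lemma hasDerivAt_fk (k : ℤ) (t : ℝ) :
    HasDerivAt (fun s => fk s k) (fk t (k - 1) + fk t (k + 1)) t := by
  have key : HasDerivAt
      (fun s => ∫ θ in (0:ℝ)..(2 * Real.pi),
        Real.exp (2 * s * Real.cos θ) * Real.cos ((k : ℝ) * θ))
      (∫ θ in (0:ℝ)..(2 * Real.pi),
        (2 * Real.cos θ) * Real.exp (2 * t * Real.cos θ) * Real.cos ((k : ℝ) * θ)) t := by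
    have H := intervalIntegral.hasDerivAt_integral_of_dominated_loc_of_deriv_le
      (F := fun (s : ℝ) (θ : ℝ) => Real.exp (2 * s * Real.cos θ) * Real.cos ((k : ℝ) * θ))
      (F' := fun (s : ℝ) (θ : ℝ) =>
        (2 * Real.cos θ) * Real.exp (2 * s * Real.cos θ) * Real.cos ((k : ℝ) * θ))
      (bound := fun _ => 2 * Real.exp (2 * (|t| + 1)))
      (μ := volume) (a := 0) (b := 2 * Real.pi) (x₀ := t) (s := Metric.ball t 1) (Metric.ball_mem_nhds t one_pos)
      ?_ (auxContInt t _) ?_ ?_ ?_ ?_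
    · exact H.2
    · filter_upwards with x
      exact ((Real.continuous_exp.comp (continuous_const.mul Real.continuous_cos)).mul
        (Real.continuous_cos.comp (continuous_const.mul continuous_id))).aestronglyMeasurable
    · exact (((continuous_const.mul Real.continuous_cos).mul
        (Real.continuous_exp.comp (continuous_const.mul Real.continuous_cos))).mul
        (Real.continuous_cos.comp (continuous_const.mul continuous_id))).aestronglyMeasurable
    · filter_upwards with θ _ x hx
      have h1 : |Real.cos θ| ≤ 1 := Real.abs_cos_le_one θ
      have h2 : |Real.cos ((k:ℝ) * θ)| ≤ 1 := Real.abs_cos_le_one _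
      have hx' : |x| ≤ |t| + 1 := by
        have h0 : |x - t| < 1 := mem_ball_iff_norm.mp hx
        have h1 : |x| - |t| ≤ |x - t| := abs_sub_abs_le_abs_sub _ _
        linarith
      have h3 : Real.exp (2 * x * Real.cos θ) ≤ Real.exp (2 * (|t| + 1)) := by
        apply Real.exp_le_exp.mpr
        calc 2 * x * Real.cos θ ≤ |2 * x * Real.cos θ| := le_abs_self _
        _ = 2 * |x| * |Real.cos θ| := by rw [abs_mul, abs_mul, abs_two]
        _ ≤ 2 * (|t| + 1) * 1 := by
            apply mul_le_mul (by nlinarith [abs_nonneg x]) h1 (abs_nonneg _)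
            positivity
        _ = 2 * (|t| + 1) := mul_one _
      have : ‖(2 * Real.cos θ) * Real.exp (2 * x * Real.cos θ) * Real.cos ((k:ℝ) * θ)‖
          ≤ 2 * Real.exp (2 * (|t| + 1)) := by
        rw [Real.norm_eq_abs, abs_mul, abs_mul, abs_mul, abs_two]
        have he : |Real.exp (2 * x * Real.cos θ)| = Real.exp (2 * x * Real.cos θ) :=
          abs_of_pos (Real.exp_pos _)
        rw [he]
        calc 2 * |Real.cos θ| * Real.exp (2 * x * Real.cos θ) * |Real.cos ((k:ℝ)*θ)|
            ≤ 2 * 1 * Real.exp (2 * (|t| + 1)) * 1 := by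
              apply mul_le_mul _ h2 (abs_nonneg _) (by positivity)
              apply mul_le_mul (by linarith) h3 (Real.exp_pos _).le (by positivity)
        _ = 2 * Real.exp (2 * (|t| + 1)) := by ring
      exact this
    · exact intervalIntegrable_const
    · filter_upwards with θ _ x _
      have h : HasDerivAt (fun y : ℝ => 2 * y * Real.cos θ) (2 * Real.cos θ) x := by
        have e : (fun y : ℝ => 2 * y * Real.cos θ) = fun y => y * (2 * Real.cos θ) := by
          funext y; ring
        rw [e]
        simpa using (hasDerivAt_id x).mul_const (2 * Real.cos θ)
      have := (h.exp).mul_const (Real.cos ((k:ℝ) * θ))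
      convert this using 1
      · rfl
      ring
  have hsplit : (∫ θ in (0:ℝ)..(2 * Real.pi),
        (2 * Real.cos θ) * Real.exp (2 * t * Real.cos θ) * Real.cos ((k : ℝ) * θ))
      = (∫ θ in (0:ℝ)..(2 * Real.pi),
          Real.exp (2 * t * Real.cos θ) * Real.cos (((k:ℝ) - 1) * θ))
        + ∫ θ in (0:ℝ)..(2 * Real.pi),
          Real.exp (2 * t * Real.cos θ) * Real.cos (((k:ℝ) + 1) * θ) := by
    rw [← intervalIntegral.integral_add (auxContInt t _) (auxContInt t _)]
    apply intervalIntegral.integral_congr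
    intro θ _
    have : Real.cos (((k:ℝ) - 1) * θ) + Real.cos (((k:ℝ) + 1) * θ)
        = 2 * Real.cos θ * Real.cos ((k:ℝ) * θ) := by
      have e1 : ((k:ℝ) - 1) * θ = (k:ℝ) * θ - θ := by ring
      have e2 : ((k:ℝ) + 1) * θ = (k:ℝ) * θ + θ := by ring
      rw [e1, e2, Real.cos_sub, Real.cos_add]
      ring
    simp only []
    linear_combination (-(Real.exp (2 * t * Real.cos θ))) * this
  have final := key.const_mul (1 / (2 * Real.pi))
  have : fk t (k - 1) + fk t (k + 1)
      = (1 / (2 * Real.pi)) * ∫ θ in (0:ℝ)..(2 * Real.pi),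
          (2 * Real.cos θ) * Real.exp (2 * t * Real.cos θ) * Real.cos ((k : ℝ) * θ) := by
    rw [hsplit, fk, fk]
    push_cast
    ring
  rw [this]
  exact final

lemma fk_even (t : ℝ) (k : ℤ) : fk t (-k) = fk t k := by
  unfold fk
  congr 1
  apply intervalIntegral.integral_congr
  intro θ _
  simp

lemma integral_cos_int (m : ℤ) :
    (∫ θ in (0:ℝ)..(2 * Real.pi), Real.cos ((m : ℝ) * θ))
      = if m = 0 then 2 * Real.pi else 0 := by
  by_cases hm : m = 0
  · simp [hm]
  · have hm' : (m : ℝ) ≠ 0 := Int.cast_ne_zero.mpr hm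
    have hAnti : ∀ θ ∈ Set.uIcc (0:ℝ) (2 * Real.pi),
        HasDerivAt (fun x => Real.sin ((m:ℝ) * x) / m) (Real.cos ((m:ℝ) * θ)) θ := by
      intro θ _
      have h1 : HasDerivAt (fun x : ℝ => (m:ℝ) * x) (m:ℝ) θ := by
        simpa using (hasDerivAt_id θ).const_mul (m:ℝ)
      have h2 := (h1.sin).div_const (m:ℝ)
      simpa [mul_comm, mul_div_assoc, mul_div_cancel_left₀ _ hm'] using h2
    have := intervalIntegral.integral_eq_sub_of_hasDerivAt hAnti
      ((Real.continuous_cos.comp (continuous_const.mul continuous_id)).intervalIntegrable _ _)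
    rw [this]
    have h0 : Real.sin ((m:ℝ) * (2 * Real.pi)) = 0 := by
      have : (m:ℝ) * (2 * Real.pi) = ((2 * m : ℤ) : ℝ) * Real.pi := by push_cast; ring
      rw [this, Real.sin_int_mul_pi]
    simp [h0, hm]

lemma Tmat_symm (n : ℕ) (t : ℝ) : (Tmat n t)ᵀ = Tmat n t := by
  funext j k
  simp only [Matrix.transpose_apply, Tmat]
  rw [← fk_even t ((j:ℤ) - (k:ℤ))]
  congr 1
  ring

set_option maxHeartbeats 800000 in
lemma Tmat_posDef (n : ℕ) (t : ℝ) : (Tmat n t).PosDef := by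
  apply Matrix.PosDef.of_dotProduct_mulVec_pos
  · rw [Matrix.IsHermitian]
    simpa using Tmat_symm n t
  intro x hx
  rw [star_trivial]
  set c : ℝ → ℝ := fun θ => ∑ j : Fin n, x j * Real.cos ((j : ℝ) * θ) with hc
  set s : ℝ → ℝ := fun θ => ∑ j : Fin n, x j * Real.sin ((j : ℝ) * θ) with hs
  have hccont : Continuous c :=
    continuous_finset_sum _ (fun j _ => continuous_const.mul
      (Real.continuous_cos.comp (continuous_const.mul continuous_id)))
  have hscont : Continuous s :=
    continuous_finset_sum _ (fun j _ => continuous_const.mul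
      (Real.continuous_sin.comp (continuous_const.mul continuous_id)))
  have hQcont : Continuous (fun θ => c θ ^ 2 + s θ ^ 2) :=
    (hccont.pow 2).add (hscont.pow 2)
  have hQ : ∀ θ : ℝ, (∑ j : Fin n, ∑ k : Fin n,
      x j * x k * Real.cos (((((j:ℤ) - (k:ℤ)) : ℤ) : ℝ) * θ)) = c θ ^ 2 + s θ ^ 2 := by
    intro θ
    rw [hc, hs]
    simp only [pow_two, Finset.sum_mul_sum, ← Finset.sum_add_distrib]
    apply Finset.sum_congr rfl
    intro j _
    apply Finset.sum_congr rfl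
    intro k _
    have e : (((((j:ℤ) - (k:ℤ)) : ℤ) : ℝ) * θ) = (j:ℝ) * θ - (k:ℝ) * θ := by
      push_cast; ring
    rw [e, Real.cos_sub]
    ring
  have hform : dotProduct x (Tmat n t *ᵥ x)
      = (1 / (2 * Real.pi)) * ∫ θ in (0:ℝ)..(2 * Real.pi),
          Real.exp (2 * t * Real.cos θ) * (c θ ^ 2 + s θ ^ 2) := by
    have h1 : dotProduct x (Tmat n t *ᵥ x) = ∑ j : Fin n, ∑ k : Fin n,
        x j * x k * fk t ((j:ℤ) - (k:ℤ)) := by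
      simp only [dotProduct, Matrix.mulVec, Tmat, Finset.mul_sum]
      apply Finset.sum_congr rfl
      intro j _
      apply Finset.sum_congr rfl
      intro k _
      ring
    rw [h1]
    have h2 : ∀ j k : Fin n, x j * x k * fk t ((j:ℤ) - (k:ℤ))
        = (1 / (2 * Real.pi)) * ∫ θ in (0:ℝ)..(2 * Real.pi),
            x j * x k * (Real.exp (2 * t * Real.cos θ)
              * Real.cos (((((j:ℤ) - (k:ℤ)) : ℤ) : ℝ) * θ)) := by
      intro j k
      rw [intervalIntegral.integral_const_mul]
      unfold fk
      ring
    simp only [h2, ← Finset.mul_sum]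
    congr 1
    calc ∑ j : Fin n, ∑ k : Fin n, ∫ θ in (0:ℝ)..(2 * Real.pi),
          x j * x k * (Real.exp (2 * t * Real.cos θ)
            * Real.cos (((((j:ℤ) - (k:ℤ)) : ℤ) : ℝ) * θ))
        = ∑ j : Fin n, ∫ θ in (0:ℝ)..(2 * Real.pi), ∑ k : Fin n,
            x j * x k * (Real.exp (2 * t * Real.cos θ)
              * Real.cos (((((j:ℤ) - (k:ℤ)) : ℤ) : ℝ) * θ)) := by
          refine Finset.sum_congr rfl (fun j _ => ?_)
          exact (intervalIntegral.integral_finset_sum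
            (f := fun (k : Fin n) (θ : ℝ) => x j * x k * (Real.exp (2 * t * Real.cos θ)
              * Real.cos (((((j:ℤ) - (k:ℤ)) : ℤ) : ℝ) * θ)))
            (fun k _ => ((auxContInt t _).const_mul _))).symm
      _ = ∫ θ in (0:ℝ)..(2 * Real.pi), ∑ j : Fin n, ∑ k : Fin n,
            x j * x k * (Real.exp (2 * t * Real.cos θ)
              * Real.cos (((((j:ℤ) - (k:ℤ)) : ℤ) : ℝ) * θ)) := by
          refine (intervalIntegral.integral_finset_sum
            (f := fun (j : Fin n) (θ : ℝ) => ∑ k : Fin n, x j * x k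
              * (Real.exp (2 * t * Real.cos θ)
                * Real.cos (((((j:ℤ) - (k:ℤ)) : ℤ) : ℝ) * θ)))
            (fun j _ => ?_)).symm
          apply Continuous.intervalIntegrable
          exact continuous_finset_sum _ (fun k _ => continuous_const.mul
            ((Real.continuous_exp.comp (continuous_const.mul Real.continuous_cos)).mul
              (Real.continuous_cos.comp (continuous_const.mul continuous_id))))
      _ = ∫ θ in (0:ℝ)..(2 * Real.pi),
            Real.exp (2 * t * Real.cos θ) * (c θ ^ 2 + s θ ^ 2) := by
          apply intervalIntegral.integral_congr
          intro θ _
          dsimp only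
          rw [← hQ θ, Finset.mul_sum]
          refine Finset.sum_congr rfl (fun j _ => ?_)
          rw [Finset.mul_sum]
          refine Finset.sum_congr rfl (fun k _ => ?_)
          ring
  rw [hform]
  have hlb : ∀ θ ∈ Set.Icc (0:ℝ) (2 * Real.pi),
      Real.exp (-(2 * |t|)) * (c θ ^ 2 + s θ ^ 2)
        ≤ Real.exp (2 * t * Real.cos θ) * (c θ ^ 2 + s θ ^ 2) := by
    intro θ _
    apply mul_le_mul_of_nonneg_right _ (by positivity)
    apply Real.exp_le_exp.mpr
    have h1 : |2 * t * Real.cos θ| ≤ 2 * |t| := by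
      rw [abs_mul, abs_mul, abs_two]
      nlinarith [Real.abs_cos_le_one θ, abs_nonneg t]
    have := neg_abs_le (2 * t * Real.cos θ)
    linarith
  have hIQ : (∫ θ in (0:ℝ)..(2 * Real.pi), c θ ^ 2 + s θ ^ 2)
      = 2 * Real.pi * ∑ j : Fin n, x j ^ 2 := by
    have hcos : ∀ (cc : ℝ), IntervalIntegrable (fun θ => Real.cos (cc * θ))
        volume 0 (2 * Real.pi) :=
      fun cc => (Real.continuous_cos.comp (continuous_const.mul continuous_id)).intervalIntegrable _ _
    have : (∫ θ in (0:ℝ)..(2 * Real.pi), c θ ^ 2 + s θ ^ 2)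
        = ∑ j : Fin n, ∑ k : Fin n, x j * x k
            * ∫ θ in (0:ℝ)..(2 * Real.pi), Real.cos (((((j:ℤ) - (k:ℤ)) : ℤ) : ℝ) * θ) := by
      calc (∫ θ in (0:ℝ)..(2 * Real.pi), c θ ^ 2 + s θ ^ 2)
          = ∫ θ in (0:ℝ)..(2 * Real.pi), ∑ j : Fin n, ∑ k : Fin n,
              x j * x k * Real.cos (((((j:ℤ) - (k:ℤ)) : ℤ) : ℝ) * θ) := by
            apply intervalIntegral.integral_congr
            intro θ _
            exact (hQ θ).symm
        _ = ∑ j : Fin n, ∫ θ in (0:ℝ)..(2 * Real.pi), ∑ k : Fin n,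
              x j * x k * Real.cos (((((j:ℤ) - (k:ℤ)) : ℤ) : ℝ) * θ) := by
            refine intervalIntegral.integral_finset_sum
              (f := fun (j : Fin n) (θ : ℝ) => ∑ k : Fin n, x j * x k
                * Real.cos (((((j:ℤ) - (k:ℤ)) : ℤ) : ℝ) * θ))
              (fun j _ => ?_)
            apply Continuous.intervalIntegrable
            exact continuous_finset_sum _ (fun k _ => continuous_const.mul
              (Real.continuous_cos.comp (continuous_const.mul continuous_id)))
        _ = ∑ j : Fin n, ∑ k : Fin n, x j * x k
            * ∫ θ in (0:ℝ)..(2 * Real.pi), Real.cos (((((j:ℤ) - (k:ℤ)) : ℤ) : ℝ) * θ) := by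
            refine Finset.sum_congr rfl (fun j _ => ?_)
            rw [intervalIntegral.integral_finset_sum
              (f := fun (k : Fin n) (θ : ℝ) => x j * x k
                * Real.cos (((((j:ℤ) - (k:ℤ)) : ℤ) : ℝ) * θ))
              (fun k _ => (hcos _).const_mul _)]
            refine Finset.sum_congr rfl (fun k _ => ?_)
            exact intervalIntegral.integral_const_mul _ _
    rw [this]
    have : ∀ j k : Fin n, x j * x k
        * (∫ θ in (0:ℝ)..(2 * Real.pi), Real.cos (((((j:ℤ) - (k:ℤ)) : ℤ) : ℝ) * θ))
        = if k = j then 2 * Real.pi * x j ^ 2 else 0 := by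
      intro j k
      rw [integral_cos_int]
      by_cases h : k = j
      · subst h; simp; ring
      · have : ((j:ℤ) - (k:ℤ)) ≠ 0 := by
          simp only [sub_ne_zero]
          exact_mod_cast fun hh => h (Fin.ext (by exact_mod_cast hh.symm))
        simp [this, h]
    simp only [this, Finset.sum_ite_eq' Finset.univ]
    simp [Finset.mul_sum]
  have hsum : 0 < ∑ j : Fin n, x j ^ 2 := by
    obtain ⟨i, hi⟩ := Function.ne_iff.mp hx
    exact Finset.sum_pos' (fun j _ => sq_nonneg _)
      ⟨i, Finset.mem_univ i, pow_two_pos_of_ne_zero (by simpa using hi)⟩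
  have hmono : Real.exp (-(2 * |t|)) * (2 * Real.pi * ∑ j : Fin n, x j ^ 2)
      ≤ ∫ θ in (0:ℝ)..(2 * Real.pi),
          Real.exp (2 * t * Real.cos θ) * (c θ ^ 2 + s θ ^ 2) := by
    have h1 : (∫ θ in (0:ℝ)..(2 * Real.pi),
        Real.exp (-(2 * |t|)) * (c θ ^ 2 + s θ ^ 2))
        ≤ ∫ θ in (0:ℝ)..(2 * Real.pi),
            Real.exp (2 * t * Real.cos θ) * (c θ ^ 2 + s θ ^ 2) := by
      apply intervalIntegral.integral_mono_on (by positivity)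
      · exact (continuous_const.mul hQcont).intervalIntegrable _ _
      · exact ((Real.continuous_exp.comp
          (continuous_const.mul Real.continuous_cos)).mul hQcont).intervalIntegrable _ _
      · exact hlb
    rw [intervalIntegral.integral_const_mul, hIQ] at h1
    exact h1
  have hpi : 0 < Real.pi := Real.pi_pos
  have hpos : 0 < Real.exp (-(2 * |t|)) * (2 * Real.pi * ∑ j : Fin n, x j ^ 2) :=
    mul_pos (Real.exp_pos _) (mul_pos (by positivity) hsum)
  have h2 : 0 < ∫ θ in (0:ℝ)..(2 * Real.pi),
      Real.exp (2 * t * Real.cos θ) * (c θ ^ 2 + s θ ^ 2) := lt_of_lt_of_le hpos hmono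
  exact mul_pos (by positivity) h2

lemma Tmat_det_isUnit (n : ℕ) (t : ℝ) : IsUnit (Tmat n t).det :=
  (Tmat_posDef n t).det_pos.ne'.isUnit

lemma differentiable_det {n : ℕ} {M : ℝ → Matrix (Fin n) (Fin n) ℝ}
    (h : ∀ i j, Differentiable ℝ (fun s => M s i j)) :
    Differentiable ℝ (fun s => (M s).det) := by
  simp_rw [Matrix.det_apply']
  apply Differentiable.fun_sum
  intro σ _
  exact (Differentiable.fun_finsetProd (fun i _ => h (σ i) i)).const_mul _

lemma differentiable_Tmat_entry (n : ℕ) (i j : Fin n) :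
    Differentiable ℝ (fun s => Tmat n s i j) :=
  fun s => (hasDerivAt_fk _ s).differentiableAt

lemma differentiable_inv_entry (n : ℕ) (i j : Fin n) :
    Differentiable ℝ (fun s => (Tmat n s)⁻¹ i j) := by
  classical
  have hdet : Differentiable ℝ (fun s => (Tmat n s).det) :=
    differentiable_det (fun a b => differentiable_Tmat_entry n a b)
  have hadj : Differentiable ℝ (fun s => (Tmat n s).adjugate i j) := by
    simp_rw [Matrix.adjugate_apply]
    apply differentiable_det
    intro a b
    simp only [Matrix.updateRow_apply]
    by_cases hab : a = j
    · simp [hab]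
    · simpa [hab] using differentiable_Tmat_entry n a b
  have he : (fun s => (Tmat n s)⁻¹ i j)
      = fun s => ((Tmat n s).det)⁻¹ * (Tmat n s).adjugate i j := by
    funext s
    rw [Matrix.inv_def, Ring.inverse_eq_inv, Matrix.smul_apply, smul_eq_mul]
  rw [he]
  exact (hdet.inv (fun s => (Tmat_posDef n s).det_pos.ne')).mul hadj

lemma dot_sym {n : ℕ} {M : Matrix (Fin n) (Fin n) ℝ} (hM : Mᵀ = M) (w d : Fin n → ℝ) :
    dotProduct (M *ᵥ w) d = dotProduct w (M *ᵥ d) := by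
  rw [dotProduct_comm, Matrix.dotProduct_mulVec, ← Matrix.mulVec_transpose, hM,
    dotProduct_comm]

lemma scalar_id (n : ℕ) (hn : 1 ≤ n) (F : ℤ → ℝ) (hF : ∀ m : ℤ, F (-m) = F m)
    (Y Uu : ℕ → ℝ)
    (hTu : ∀ m : ℕ, m < n →
      (∑ k ∈ Finset.range n, F ((m : ℤ) - (k : ℤ)) * Uu k) = F ((m : ℤ) + 1)) :
    ((∑ j ∈ Finset.range n, (F (j : ℤ) + F ((j : ℤ) + 2)) * Y j)
      - ∑ j ∈ Finset.range n,
          (∑ k ∈ Finset.range n,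
            (F ((j:ℤ) - (k:ℤ) - 1) + F ((j:ℤ) - (k:ℤ) + 1)) * Uu k) * Y j)
    = Y 0 * (F 0 - ∑ k ∈ Finset.range n, Uu k * F ((k : ℤ) + 1))
      + Y (n - 1) * (F ((n : ℤ) + 1) - ∑ k ∈ Finset.range n, F ((n:ℤ) - (k:ℤ)) * Uu k) := by
  obtain ⟨m, rfl⟩ : ∃ m, n = m + 1 := ⟨n - 1, (Nat.succ_pred_eq_of_pos hn).symm⟩
  set N := m + 1
  set P : ℤ → ℝ := fun q => ∑ k ∈ Finset.range N, F (q - (k : ℤ)) * Uu k with hPdef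
  have hP : ∀ q : ℕ, q < N → P (q : ℤ) = F ((q : ℤ) + 1) := fun q hq => hTu q hq
  have hPneg : P (-1) = ∑ k ∈ Finset.range N, Uu k * F ((k : ℤ) + 1) := by
    rw [hPdef]
    refine Finset.sum_congr rfl (fun k _ => ?_)
    rw [show (-1 : ℤ) - (k : ℤ) = -((k : ℤ) + 1) by ring, hF]
    ring
  have hsplit : ∀ j : ℕ, (∑ k ∈ Finset.range N,
      (F ((j:ℤ) - (k:ℤ) - 1) + F ((j:ℤ) - (k:ℤ) + 1)) * Uu k)
      = P ((j : ℤ) - 1) + P ((j : ℤ) + 1) := by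
    intro j
    rw [hPdef]
    rw [← Finset.sum_add_distrib]
    refine Finset.sum_congr rfl (fun k _ => ?_)
    rw [show (j:ℤ) - 1 - (k:ℤ) = (j:ℤ) - (k:ℤ) - 1 by ring,
        show (j:ℤ) + 1 - (k:ℤ) = (j:ℤ) - (k:ℤ) + 1 by ring]
    ring
  simp only [hsplit]
  have e1 : (∑ j ∈ Finset.range N, (F (j:ℤ) + F ((j:ℤ) + 2)) * Y j)
      = (∑ j ∈ Finset.range N, F (j:ℤ) * Y j)
        + ∑ j ∈ Finset.range N, F ((j:ℤ) + 2) * Y j := by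
    rw [← Finset.sum_add_distrib]; exact Finset.sum_congr rfl (fun j _ => by ring)
  have e2 : (∑ j ∈ Finset.range N, (P ((j:ℤ) - 1) + P ((j:ℤ) + 1)) * Y j)
      = (∑ j ∈ Finset.range N, P ((j:ℤ) - 1) * Y j)
        + ∑ j ∈ Finset.range N, P ((j:ℤ) + 1) * Y j := by
    rw [← Finset.sum_add_distrib]; exact Finset.sum_congr rfl (fun j _ => by ring)
  have e3 : (∑ j ∈ Finset.range N, F (j:ℤ) * Y j)
      = (∑ j ∈ Finset.range m, F ((j:ℤ) + 1) * Y (j + 1)) + F 0 * Y 0 := by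
    rw [Finset.sum_range_succ']
    push_cast
    ring
  have e4 : (∑ j ∈ Finset.range N, F ((j:ℤ) + 2) * Y j)
      = (∑ j ∈ Finset.range m, F ((j:ℤ) + 2) * Y j) + F ((N:ℤ) + 1) * Y m := by
    rw [Finset.sum_range_succ]
    have : ((m:ℤ) + 2) = ((N:ℤ) + 1) := by simp [N]; ring
    rw [this]
  have e5 : (∑ j ∈ Finset.range N, P ((j:ℤ) - 1) * Y j)
      = (∑ j ∈ Finset.range m, F ((j:ℤ) + 1) * Y (j + 1)) + P (-1) * Y 0 := by
    rw [Finset.sum_range_succ']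
    have : ∀ j ∈ Finset.range m, P (((j + 1 : ℕ) : ℤ) - 1) * Y (j + 1)
        = F ((j:ℤ) + 1) * Y (j + 1) := by
      intro j hj
      have hj' : j < N := by
        have := Finset.mem_range.mp hj; omega
      rw [show (((j + 1 : ℕ) : ℤ) - 1) = (j : ℤ) by push_cast; ring, hP j hj']
    rw [Finset.sum_congr rfl this]
    norm_num
  have e6 : (∑ j ∈ Finset.range N, P ((j:ℤ) + 1) * Y j)
      = (∑ j ∈ Finset.range m, F ((j:ℤ) + 2) * Y j) + P (N : ℤ) * Y m := by
    rw [Finset.sum_range_succ]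
    have : ∀ j ∈ Finset.range m, P ((j:ℤ) + 1) * Y j = F ((j:ℤ) + 2) * Y j := by
      intro j hj
      have hj' : j + 1 < N := by
        have := Finset.mem_range.mp hj; omega
      have := hP (j + 1) hj'
      rw [show ((j:ℤ) + 1) = ((j + 1 : ℕ) : ℤ) by push_cast; ring, this]
      push_cast
      ring_nf
    rw [Finset.sum_congr rfl this]
    rw [show ((m:ℤ) + 1) = (N:ℤ) by simp [N]]
  have hPN : P (N : ℤ) = ∑ k ∈ Finset.range N, F ((N:ℤ) - (k:ℤ)) * Uu k := rfl
  have hYm : Y (N - 1) = Y m := by simp [N]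
  rw [e1, e2, e3, e4, e5, e6, hYm, ← hPN, ← hPneg]
  ring

end Aux

/-- The differentiation formula
dU_n/dt = V_n⁻·(f_0 − ⟨u⁺, f⁺⟩) + V_n⁺·(f_{n+1} − ⟨u⁻, f⁺⟩). -/
theorem Un_deriv_formula (n : ℕ) (hn : 1 ≤ n) (t : ℝ) :
    HasDerivAt (Un n)
      (Vminus n t * (fk t 0 - dotProduct ((Tmat n t)⁻¹ *ᵥ fplus n t) (fplus n t))
        + Vplus n t * (fk t ((n : ℤ) + 1) - dotProduct ((Tmat n t)⁻¹ *ᵥ fminus n t) (fplus n t)))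
      t := by
  classical
  have hdet : ∀ s : ℝ, IsUnit (Tmat n s).det := fun s => Tmat_det_isUnit n s
  set uu : ℝ → (Fin n → ℝ) := fun s => (Tmat n s)⁻¹ *ᵥ fplus n s with huu
  -- differentiability of components of uu
  have hudiff : ∀ i : Fin n, Differentiable ℝ (fun s => uu s i) := by
    intro i
    have he : (fun s => uu s i) = fun s => ∑ k, (Tmat n s)⁻¹ i k * fplus n s k := by
      funext s
      simp [huu, Matrix.mulVec, dotProduct]
    rw [he]
    apply Differentiable.fun_sum
    intro k _
    exact (differentiable_inv_entry n i k).mul (fun s => (hasDerivAt_fk _ s).differentiableAt)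
  set g : Fin n → ℝ := fun i => deriv (fun s => uu s i) t with hgdef
  have hg : ∀ i, HasDerivAt (fun s => uu s i) (g i) t :=
    fun i => ((hudiff i) t).hasDerivAt
  -- T' and v'
  set Tp : Matrix (Fin n) (Fin n) ℝ :=
    fun j k => fk t ((j:ℤ) - (k:ℤ) - 1) + fk t ((j:ℤ) - (k:ℤ) + 1) with hTp
  set vp : Fin n → ℝ := fun j => fk t (j:ℤ) + fk t ((j:ℤ) + 2) with hvp
  have hTvu : ∀ s : ℝ, Tmat n s *ᵥ uu s = fplus n s := by
    intro s
    rw [huu]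
    simp only []
    rw [Matrix.mulVec_mulVec, Matrix.mul_nonsing_inv _ (hdet s), Matrix.one_mulVec]
  -- derivative of the identity T u = v pins down g
  have hgeq : Tmat n t *ᵥ g = fun j => vp j - (Tp *ᵥ uu t) j := by
    funext j
    have h1 : HasDerivAt (fun s => ∑ k : Fin n, Tmat n s j k * uu s k)
        (∑ k : Fin n, ((fk t ((j:ℤ) - (k:ℤ) - 1) + fk t ((j:ℤ) - (k:ℤ) + 1)) * uu t k
          + Tmat n t j k * g k)) t := by
      apply HasDerivAt.fun_sum
      intro k _
      exact (hasDerivAt_fk _ t).mul (hg k)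
    have h2 : HasDerivAt (fun s => fplus n s j) (vp j) t := by
      have := hasDerivAt_fk ((j:ℤ) + 1) t
      have e : ((j:ℤ) + 1 - 1) = (j:ℤ) := by ring
      rw [e] at this
      exact this
    have heqfun : (fun s => ∑ k : Fin n, Tmat n s j k * uu s k) = fun s => fplus n s j := by
      funext s
      have := congrFun (hTvu s) j
      simpa [Matrix.mulVec, dotProduct] using this
    rw [heqfun] at h1
    have huniq := h1.unique h2
    have hsum : (∑ k : Fin n, ((fk t ((j:ℤ) - (k:ℤ) - 1) + fk t ((j:ℤ) - (k:ℤ) + 1)) * uu t k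
          + Tmat n t j k * g k))
        = (Tp *ᵥ uu t) j + (Tmat n t *ᵥ g) j := by
      rw [Finset.sum_add_distrib]
      simp [Matrix.mulVec, dotProduct, hTp]
    rw [hsum] at huniq
    show (Tmat n t *ᵥ g) j = vp j - (Tp *ᵥ uu t) j
    linarith
  have hgval : g = (Tmat n t)⁻¹ *ᵥ (fun j => vp j - (Tp *ᵥ uu t) j) := by
    rw [← hgeq, Matrix.mulVec_mulVec, Matrix.nonsing_inv_mul _ (hdet t), Matrix.one_mulVec]
  -- Un has derivative ⟨g, δ⁻⟩
  have hUn : HasDerivAt (Un n) (dotProduct g (deltaMinus n)) t := by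
    have he : Un n = fun s => ∑ i, uu s i * deltaMinus n i := by
      funext s
      simp [Un, huu, dotProduct]
    rw [he]
    exact HasDerivAt.fun_sum (fun i _ => (hg i).mul_const _)
  -- it remains to identify ⟨g, δ⁻⟩ with the claimed formula
  suffices hmain : dotProduct g (deltaMinus n)
      = Vminus n t * (fk t 0 - dotProduct ((Tmat n t)⁻¹ *ᵥ fplus n t) (fplus n t))
        + Vplus n t * (fk t ((n : ℤ) + 1)
            - dotProduct ((Tmat n t)⁻¹ *ᵥ fminus n t) (fplus n t)) by
    rw [← hmain]
    exact hUn
  -- setup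
  set y : Fin n → ℝ := (Tmat n t)⁻¹ *ᵥ deltaMinus n with hy
  have hsymmInv : ((Tmat n t)⁻¹)ᵀ = (Tmat n t)⁻¹ := by
    rw [Matrix.transpose_nonsing_inv, Tmat_symm]
  have hstep1 : dotProduct g (deltaMinus n)
      = dotProduct (fun j => vp j - (Tp *ᵥ uu t) j) y := by
    rw [hgval, dot_sym hsymmInv]
  set i0 : Fin n := ⟨0, hn⟩ with hi0
  set iN : Fin n := ⟨n - 1, by omega⟩ with hiN
  -- extensions to ℕ
  set Y : ℕ → ℝ := fun j => if h : j < n then y ⟨j, h⟩ else 0 with hY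
  set Uu : ℕ → ℝ := fun k => if h : k < n then uu t ⟨k, h⟩ else 0 with hU
  have hYc : ∀ i : Fin n, Y (i : ℕ) = y i := by
    intro i; rw [hY]; simp [Fin.is_lt]
  have hUc : ∀ i : Fin n, Uu (i : ℕ) = uu t i := by
    intro i; rw [hU]; simp [Fin.is_lt]
  -- hypothesis for scalar_id
  have hTu : ∀ m : ℕ, m < n →
      (∑ k ∈ Finset.range n, fk t ((m : ℤ) - (k : ℤ)) * Uu k) = fk t ((m : ℤ) + 1) := by
    intro m hm
    have hc := congrFun (hTvu t) ⟨m, hm⟩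
    have hlhs : (Tmat n t *ᵥ uu t) ⟨m, hm⟩
        = ∑ k : Fin n, fk t ((m : ℤ) - (k : ℤ)) * uu t k := by
      simp [Matrix.mulVec, dotProduct, Tmat]
    have hrhs : fplus n t ⟨m, hm⟩ = fk t ((m : ℤ) + 1) := rfl
    rw [hlhs, hrhs] at hc
    rw [← Fin.sum_univ_eq_sum_range (fun k => fk t ((m : ℤ) - (k : ℤ)) * Uu k) n]
    rw [← hc]
    exact Finset.sum_congr rfl (fun k _ => by rw [hUc k])
  have key := scalar_id n hn (fk t) (fun m => fk_even t m) Y Uu hTu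
  -- convert LHS
  have hL1 : dotProduct (fun j => vp j - (Tp *ᵥ uu t) j) y
      = (∑ j ∈ Finset.range n, (fk t (j : ℤ) + fk t ((j : ℤ) + 2)) * Y j)
        - ∑ j ∈ Finset.range n,
            (∑ k ∈ Finset.range n,
              (fk t ((j:ℤ) - (k:ℤ) - 1) + fk t ((j:ℤ) - (k:ℤ) + 1)) * Uu k) * Y j := by
    have hinner : ∀ j : Fin n, (Tp *ᵥ uu t) j
        = ∑ k ∈ Finset.range n,
            (fk t (((j:ℕ):ℤ) - (k:ℤ) - 1) + fk t (((j:ℕ):ℤ) - (k:ℤ) + 1)) * Uu k := by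
      intro j
      rw [← Fin.sum_univ_eq_sum_range
        (fun k => (fk t (((j:ℕ):ℤ) - (k:ℤ) - 1) + fk t (((j:ℕ):ℤ) - (k:ℤ) + 1)) * Uu k) n]
      simp only [Matrix.mulVec, dotProduct, hTp]
      exact Finset.sum_congr rfl (fun k _ => by rw [hUc k])
    have : dotProduct (fun j => vp j - (Tp *ᵥ uu t) j) y
        = ∑ j : Fin n, ((fk t ((j:ℕ):ℤ) + fk t (((j:ℕ):ℤ) + 2))
            - ∑ k ∈ Finset.range n,
              (fk t (((j:ℕ):ℤ) - (k:ℤ) - 1) + fk t (((j:ℕ):ℤ) - (k:ℤ) + 1)) * Uu k) * Y (j:ℕ) := by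
      unfold dotProduct
      refine Finset.sum_congr rfl (fun j _ => ?_)
      dsimp only
      rw [hinner j, hYc j]
    rw [this,
      Fin.sum_univ_eq_sum_range (fun j => ((fk t (j:ℤ) + fk t ((j:ℤ) + 2))
        - ∑ k ∈ Finset.range n,
          (fk t ((j:ℤ) - (k:ℤ) - 1) + fk t ((j:ℤ) - (k:ℤ) + 1)) * Uu k) * Y j) n]
    rw [← Finset.sum_sub_distrib]
    exact Finset.sum_congr rfl (fun j _ => by ring)
  -- convert RHS pieces
  have hVminus : Vminus n t = Y 0 := by
    have : Vminus n t = ∑ i : Fin n, y i * deltaPlus n i := rfl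
    rw [this]
    rw [Finset.sum_eq_single i0]
    · have : deltaPlus n i0 = 1 := by simp [deltaPlus, hi0]
      rw [this, mul_one]
      have : Y 0 = y i0 := by
        simp only [hY]
        rw [dif_pos (show 0 < n from hn)]
      rw [this]
    · intro b _ hb
      have : deltaPlus n b = 0 := by
        simp only [deltaPlus, ite_eq_right_iff]
        intro hb0
        exact absurd (Fin.ext hb0 : b = i0) hb
      rw [this, mul_zero]
    · intro h; exact absurd (Finset.mem_univ i0) h
  have hyiN : y iN = (Tmat n t)⁻¹ iN iN := by
    rw [hy]
    simp only [Matrix.mulVec, dotProduct]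
    rw [Finset.sum_eq_single iN]
    · have : deltaMinus n iN = 1 := by simp [deltaMinus, hiN]
      rw [this, mul_one]
    · intro b _ hb
      have : deltaMinus n b = 0 := by
        simp only [deltaMinus, ite_eq_right_iff]
        intro hb0
        exact absurd (Fin.ext hb0 : b = iN) hb
      rw [this, mul_zero]
    · intro h; exact absurd (Finset.mem_univ iN) h
  have hVplus : Vplus n t = Y (n - 1) := by
    have h1 : Vplus n t = (Tmat n t)⁻¹ i0 i0 := by
      have : Vplus n t = ∑ i : Fin n, (∑ k : Fin n, (Tmat n t)⁻¹ i k * deltaPlus n k)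
          * deltaPlus n i := rfl
      rw [this]
      rw [Finset.sum_eq_single i0]
      · have hd : deltaPlus n i0 = 1 := by simp [deltaPlus, hi0]
        rw [hd, mul_one]
        rw [Finset.sum_eq_single i0]
        · rw [hd, mul_one]
        · intro b _ hb
          have : deltaPlus n b = 0 := by
            simp only [deltaPlus, ite_eq_right_iff]
            intro hb0
            exact absurd (Fin.ext hb0 : b = i0) hb
          rw [this, mul_zero]
        · intro h; exact absurd (Finset.mem_univ i0) h
      · intro b _ hb
        have : deltaPlus n b = 0 := by
          simp only [deltaPlus, ite_eq_right_iff]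
          intro hb0
          exact absurd (Fin.ext hb0 : b = i0) hb
        rw [this, mul_zero]
      · intro h; exact absurd (Finset.mem_univ i0) h
    -- persymmetry
    have hpersym : (Tmat n t).submatrix (Fin.revPerm : Fin n ≃ Fin n)
        (Fin.revPerm : Fin n ≃ Fin n) = Tmat n t := by
      funext a b
      simp only [Matrix.submatrix_apply, Tmat, Fin.revPerm_apply]
      rw [← fk_even t (((Fin.rev a : Fin n) : ℤ) - ((Fin.rev b : Fin n) : ℤ))]
      congr 1
      have ha : ((Fin.rev a : Fin n) : ℕ) = n - 1 - (a : ℕ) := by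
        simp [Fin.rev]
        omega
      have hb : ((Fin.rev b : Fin n) : ℕ) = n - 1 - (b : ℕ) := by
        simp [Fin.rev]
        omega
      have ha' : (a : ℕ) < n := a.is_lt
      have hb' : (b : ℕ) < n := b.is_lt
      omega
    have hinvper := Matrix.inv_submatrix_equiv (Tmat n t)
      (Fin.revPerm : Fin n ≃ Fin n) (Fin.revPerm : Fin n ≃ Fin n)
    rw [hpersym] at hinvper
    have h2 : (Tmat n t)⁻¹ i0 i0 = (Tmat n t)⁻¹ iN iN := by
      have hcf := congrFun (congrFun hinvper i0) i0
      rw [hcf]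
      simp only [Matrix.submatrix_apply, Fin.revPerm_apply]
      congr 1 <;>
      · apply Fin.ext
        simp [Fin.rev, hi0, hiN]
        omega
    have h3 : Y (n - 1) = y iN := by
      simp only [hY]
      rw [dif_pos (show n - 1 < n by omega)]
    rw [h1, h2, ← hyiN]
    exact h3.symm
  have hdot1 : dotProduct ((Tmat n t)⁻¹ *ᵥ fplus n t) (fplus n t)
      = ∑ k ∈ Finset.range n, Uu k * fk t ((k : ℤ) + 1) := by
    rw [← Fin.sum_univ_eq_sum_range (fun k => Uu k * fk t ((k : ℤ) + 1)) n]
    unfold dotProduct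
    refine Finset.sum_congr rfl (fun k _ => ?_)
    rw [hUc k]
    rfl
  have hdot2 : dotProduct ((Tmat n t)⁻¹ *ᵥ fminus n t) (fplus n t)
      = ∑ k ∈ Finset.range n, fk t ((n:ℤ) - (k:ℤ)) * Uu k := by
    rw [dot_sym hsymmInv]
    rw [← Fin.sum_univ_eq_sum_range (fun k => fk t ((n:ℤ) - (k:ℤ)) * Uu k) n]
    unfold dotProduct
    refine Finset.sum_congr rfl (fun k _ => ?_)
    rw [hUc k]
    rfl
  rw [hstep1, hL1, hVminus, hVplus, hdot1, hdot2]
  exact key
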